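/- Let [T1,T1'] and [T2,T2'] be two Tamari intervals of size n with interval-posets I1 = IP[T1,T1'] and I2 = IP[T2,T2']. Then the interval [T1,T1'] is contained in [T2,T2'] (i.e. T2 ≤ T1 and T1' ≤ T2' in the Tamari order) if and only if every relation of I2 is a relation of I1. -/

import Mathlib

open Polynomial

/-- A binary tree: either the empty tree or a pair of binary trees
(left and right subtrees) grafted on an internal node. -/
inductive BinTree : Type
  | leaf : BinTree
  | node : BinTree → BinTree → BinTree

namespace BinTree

/-- The size of a binary tree: its number of internal nodes. -/
def size : BinTree → ℕ
  | leaf => 0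
  | node l r => l.size + r.size + 1

/-- One right rotation somewhere in the tree: `Rot T T'` means that `T'` is obtained
from `T` by replacing one subtree of the form `y(x(A,B),C)` by `x(A,y(B,C))`. -/
inductive Rot : BinTree → BinTree → Prop
  | root (A B C : BinTree) : Rot (node (node A B) C) (node A (node B C))
  | left {L L' : BinTree} (R : BinTree) : Rot L L' → Rot (node L R) (node L' R)
  | right (L : BinTree) {R R' : BinTree} : Rot R R' → Rot (node L R) (node L R')

/-- The Tamari order: `TamariLE T T'` iff `T'` is obtained from `T` by a (possibly empty)
sequence of right rotations. -/
def TamariLE (T T' : BinTree) : Prop := Relation.ReflTransGen Rot T T'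

/-- The Tamari polynomial `B_T ∈ ℤ[x]`: `B_∅ = 1` and for `T = x(L,R)`, `B_T` is the
unique polynomial with `(x-1)·B_T = x·B_L·(x·B_R - B_R(1))` (exact division by the
monic polynomial `X - 1`, the right-hand side vanishing at `x = 1`). -/
noncomputable def tamPoly : BinTree → Polynomial ℤ
  | leaf => 1
  | node l r =>
      (X * tamPoly l * (X * tamPoly r - C ((tamPoly r).eval 1))) /ₘ (X - C 1)

/-- The mirror Tamari polynomial, obtained by exchanging the roles of the left and
right subtrees in the recursive definition of the Tamari polynomial. -/
noncomputable def tamPolyMirror : BinTree → Polynomial ℤ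
  | leaf => 1
  | node l r =>
      (X * tamPolyMirror r * (X * tamPolyMirror l - C ((tamPolyMirror l).eval 1))) /ₘ (X - C 1)

/-- The number of nodes on the left border of a binary tree. -/
def leftBorder : BinTree → ℕ
  | leaf => 0
  | node l _ => l.leftBorder + 1

/-- The number of nodes on the right border of a binary tree. -/
def rightBorder : BinTree → ℕ
  | leaf => 0
  | node _ r => r.rightBorder + 1

/-- `inSub T a b`: in the unique binary-search-tree labelling of `T` by `1,…,size T`
(all labels of the left subtree of a node are smaller than its label, all labels of its
right subtree are larger), the node labelled `a` belongs to the subtree rooted at the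
node labelled `b` (in particular `inSub T a a` holds for every node label `a`). -/
def inSub : BinTree → ℕ → ℕ → Prop
  | leaf => fun _ _ => False
  | node l r => fun a b =>
      (b = l.size + 1 ∧ 1 ≤ a ∧ a ≤ l.size + r.size + 1) ∨
      inSub l a b ∨
      (l.size + 1 < a ∧ l.size + 1 < b ∧ inSub r (a - (l.size + 1)) (b - (l.size + 1)))

/-- The binary search tree poset of `T`: `bstRel T a b` iff `a ≺_T b`, i.e. `a ≠ b` and
the node labelled `a` is in the subtree rooted at the node labelled `b`. -/
def bstRel (T : BinTree) (a b : ℕ) : Prop := a ≠ b ∧ inSub T a b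

/-- The increasing forest `inc(T)`: `a ≺ b` iff `a < b` and `a ≺_T b`. -/
def incRel (T : BinTree) (a b : ℕ) : Prop := a < b ∧ bstRel T a b

/-- The decreasing forest `dec(T)`: `b ≺ a` iff `b > a` and `b ≺_T a`. -/
def decRel (T : BinTree) (a b : ℕ) : Prop := b < a ∧ bstRel T a b

/-- The relations of the interval-poset `IP[T,T']`: exactly those of `dec(T)`
together with those of `inc(T')`. -/
def IPrel (T T' : BinTree) (a b : ℕ) : Prop := decRel T a b ∨ incRel T' a b

end BinTree

open BinTree

/-- `σ` is a linear extension of the strict relation `rel` on `{1,…,n}`: reading the word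
`σ(1)…σ(n)` (the `i`-th letter being the label `(σ i : ℕ) + 1`), whenever `rel a b` holds
the letter `a` appears before the letter `b`. -/
def IsLinExt (n : ℕ) (rel : ℕ → ℕ → Prop) (σ : Equiv.Perm (Fin n)) : Prop :=
  ∀ i j : Fin n, rel ((σ i : ℕ) + 1) ((σ j : ℕ) + 1) → i < j

/-- An interval-poset of size `n`: a (strict) poset on `{1,…,n}` such that
`a ≺ c` implies `b ≺ c` for all `a < b < c`, and `c ≺ a` implies `b ≺ a` for all
`a < b < c`. -/
def IsIntervalPoset (n : ℕ) (rel : ℕ → ℕ → Prop) : Prop :=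
  (∀ a b, rel a b → 1 ≤ a ∧ a ≤ n ∧ 1 ≤ b ∧ b ≤ n) ∧
  (∀ a, ¬ rel a a) ∧
  (∀ a b c, rel a b → rel b c → rel a c) ∧
  (∀ a b c, a < b → b < c → rel a c → rel b c) ∧
  (∀ a b c, a < b → b < c → rel c a → rel b a)

/-- `trees(P)` : the number of connected components of the forest formed by the decreasing
relations of `P`, i.e. the number of `k ∈ {1,…,n}` such that there is no `j < k`
with `k ≺_P j`. -/
noncomputable def treeStat (n : ℕ) (rel : ℕ → ℕ → Prop) : ℕ :=
  Set.ncard {k : ℕ | 1 ≤ k ∧ k ≤ n ∧ ∀ j, j < k → ¬ rel k j}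

/-- The composition `𝔹(I1,I2)` of two interval-posets of sizes `k1` and `k2`:
the set of interval-posets `I` of size `k1+k2+1` such that
(i) the relations of `I` among `1,…,k1` are exactly those of `I1`,
(ii) the relations of `I` among `k1+2,…,k1+k2+1` are exactly those of `I2` shifted
by `k1+1`, (iii) `i ≺_I k1+1` for all `i ≤ k1`, and (iv) there is no relation
`k1+1 ≺_I j` for `j > k1+1`. -/
def Comp (k1 k2 : ℕ) (I1 I2 : ℕ → ℕ → Prop) : Set (ℕ → ℕ → Prop) :=
  {I | IsIntervalPoset (k1 + k2 + 1) I ∧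
    (∀ a b, 1 ≤ a → a ≤ k1 → 1 ≤ b → b ≤ k1 → (I a b ↔ I1 a b)) ∧
    (∀ a b, k1 + 2 ≤ a → a ≤ k1 + k2 + 1 → k1 + 2 ≤ b → b ≤ k1 + k2 + 1 →
      (I a b ↔ I2 (a - (k1 + 1)) (b - (k1 + 1)))) ∧
    (∀ i, 1 ≤ i → i ≤ k1 → I i (k1 + 1)) ∧
    (∀ j, k1 + 1 < j → ¬ I (k1 + 1) j)}

/-- The co-inversions of a permutation `σ` of `{1,…,n}` (written as the word
`σ(1)…σ(n)`): pairs `(σ(i), σ(j))` with `i < j` and `σ(i) > σ(j)`. -/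
def coinv (n : ℕ) (σ : Equiv.Perm (Fin n)) : Set (Fin n × Fin n) :=
  {p | ∃ i j : Fin n, i < j ∧ σ j < σ i ∧ p = (σ i, σ j)}

namespace BinTree

/-! ### Auxiliary development: bracket vectors (right-subtree sizes) and mirror trees -/

/-- The mirror image of a binary tree. -/
def mirror : BinTree → BinTree
  | leaf => leaf
  | node l r => node (mirror r) (mirror l)

@[simp] lemma mirror_size (T : BinTree) : T.mirror.size = T.size := by
  induction T with
  | leaf => rfl
  | node l r ihl ihr => simp [mirror, size, ihl, ihr]; omega

@[simp] lemma mirror_mirror (T : BinTree) : T.mirror.mirror = T := by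
  induction T with
  | leaf => rfl
  | node l r ihl ihr => simp [mirror, ihl, ihr]

lemma size_eq_zero {T : BinTree} (h : T.size = 0) : T = leaf := by
  cases T with
  | leaf => rfl
  | node l r => simp [size] at h

/-- The size of the right subtree of the node labelled `x` (0 if out of range). -/
def rsz : BinTree → ℕ → ℕ
  | leaf, _ => 0
  | node l r, x =>
      if x = l.size + 1 then r.size
      else if x ≤ l.size then rsz l x
      else rsz r (x - (l.size + 1))

lemma rsz_node_eq {l r : BinTree} {x : ℕ} (h : x = l.size + 1) :
    rsz (node l r) x = r.size := by simp [rsz, h]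

lemma rsz_node_lt {l r : BinTree} {x : ℕ} (h : x ≤ l.size) :
    rsz (node l r) x = rsz l x := by
  have : ¬ x = l.size + 1 := by omega
  simp [rsz, this, h]

lemma rsz_node_gt {l r : BinTree} {x : ℕ} (h : l.size + 1 < x) :
    rsz (node l r) x = rsz r (x - (l.size + 1)) := by
  have h1 : ¬ x = l.size + 1 := by omega
  have h2 : ¬ x ≤ l.size := by omega
  simp [rsz, h1, h2]

lemma rsz_out {T : BinTree} {x : ℕ} (h : x = 0 ∨ T.size < x) : rsz T x = 0 := by
  induction T generalizing x with
  | leaf => rfl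
  | node l r ihl ihr =>
      simp only [size] at h
      rcases h with h | h
      · rw [h, rsz_node_lt (by omega)]
        exact ihl (Or.inl rfl)
      · rw [rsz_node_gt (by omega)]
        exact ihr (Or.inr (by omega))

lemma rsz_bnd {T : BinTree} {x : ℕ} (h1 : 1 ≤ x) (h2 : x ≤ T.size) :
    x + rsz T x ≤ T.size := by
  induction T generalizing x with
  | leaf => simp [size] at h2; omega
  | node l r ihl ihr =>
      simp only [size] at h2 ⊢
      rcases Nat.lt_trichotomy x (l.size + 1) with h | h | h
      · rw [rsz_node_lt (by omega)]
        have := ihl h1 (by omega)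
        omega
      · rw [rsz_node_eq h]; omega
      · rw [rsz_node_gt h]
        have := ihr (x := x - (l.size + 1)) (by omega) (by omega)
        omega

/-- Closure property of the bracket vector. -/
lemma rsz_closure {T : BinTree} {x y : ℕ} (hxy : x < y) (hy : y ≤ x + rsz T x) :
    y + rsz T y ≤ x + rsz T x := by
  induction T generalizing x y with
  | leaf => simp [rsz] at hy; omega
  | node l r ihl ihr =>
      rcases Nat.lt_trichotomy x (l.size + 1) with h | h | h
      · -- x inside the left subtree (or x = 0)
        rcases Nat.eq_zero_or_pos x with hx0 | hx0
        · subst hx0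
          rw [rsz_node_lt (by omega), rsz_out (Or.inl rfl)] at hy; omega
        · rw [rsz_node_lt (show x ≤ l.size by omega)] at hy
          have hb := rsz_bnd (T := l) (x := x) hx0 (show x ≤ l.size by omega)
          have hyl : y ≤ l.size := by omega
          rw [rsz_node_lt hyl, rsz_node_lt (show x ≤ l.size by omega)]
          exact ihl hxy hy
      · -- x is the root
        rw [rsz_node_eq h] at hy ⊢
        have hygt : l.size + 1 < y := by omega
        rw [rsz_node_gt hygt]
        have := rsz_bnd (T := r) (x := y - (l.size + 1)) (by omega) (by omega)
        omega
      · -- x inside the right subtree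
        rw [rsz_node_gt h] at hy ⊢
        rw [rsz_node_gt (by omega)]
        have := ihr (x := x - (l.size + 1)) (y := y - (l.size + 1))
          (by omega) (by omega)
        omega

lemma inSub_bounds {T : BinTree} {a b : ℕ} (h : inSub T a b) :
    1 ≤ a ∧ a ≤ T.size ∧ 1 ≤ b ∧ b ≤ T.size := by
  induction T generalizing a b with
  | leaf => exact absurd h (by simp [inSub])
  | node l r ihl ihr =>
      simp only [size]
      rcases h with ⟨hb, ha1, ha2⟩ | h | ⟨ha, hb, h⟩
      · omega
      · have := ihl h; omega
      · have := ihr h; omega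

/-- Characterization of decreasing relations via the bracket vector. -/
lemma inSub_iff_rsz {T : BinTree} {a b : ℕ} (hba : b < a) :
    inSub T a b ↔ 1 ≤ b ∧ a ≤ b + rsz T b := by
  induction T generalizing a b with
  | leaf => simp [inSub, rsz]; omega
  | node l r ihl ihr =>
      rcases Nat.lt_trichotomy b (l.size + 1) with h | h | h
      · rw [rsz_node_lt (by omega)]
        constructor
        · rintro (⟨hb, _⟩ | hs | ⟨_, hb, _⟩)
          · omega
          · exact (ihl hba).mp hs
          · omega
        · rintro ⟨hb1, hb2⟩
          exact Or.inr (Or.inl ((ihl hba).mpr ⟨hb1, hb2⟩))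
      · rw [rsz_node_eq h]
        constructor
        · rintro (⟨_, _, ha⟩ | hs | ⟨_, hb, _⟩)
          · omega
          · have := inSub_bounds hs; omega
          · omega
        · rintro ⟨hb1, hb2⟩
          exact Or.inl ⟨h, by omega, by omega⟩
      · rw [rsz_node_gt h]
        constructor
        · rintro (⟨hb, _⟩ | hs | ⟨_, _, hs⟩)
          · omega
          · have := inSub_bounds hs; omega
          · have := (ihr (a := a - (l.size + 1)) (b := b - (l.size + 1))
              (by omega)).mp hs
            omega
        · rintro ⟨hb1, hb2⟩
          refine Or.inr (Or.inr ⟨by omega, h, ?_⟩)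
          exact (ihr (by omega)).mpr ⟨by omega, by omega⟩

lemma decRel_iff_rsz {T : BinTree} {a b : ℕ} :
    decRel T a b ↔ 1 ≤ b ∧ b < a ∧ a ≤ b + rsz T b := by
  constructor
  · rintro ⟨hba, hne, hs⟩
    have := (inSub_iff_rsz hba).mp hs
    exact ⟨this.1, hba, this.2⟩
  · rintro ⟨h1, h2, h3⟩
    exact ⟨h2, by omega, (inSub_iff_rsz h2).mpr ⟨h1, h3⟩⟩

lemma inSub_mirror {T : BinTree} {a b : ℕ} (h : inSub T a b) :
    inSub T.mirror (T.size + 1 - a) (T.size + 1 - b) := by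
  induction T generalizing a b with
  | leaf => exact absurd h (by simp [inSub])
  | node l r ihl ihr =>
      have hb := inSub_bounds h
      have mr := r.mirror_size
      have ml := l.mirror_size
      simp only [size] at *
      rcases h with ⟨hbm, ha1, ha2⟩ | hs | ⟨ha, hbgt, hs⟩
      · exact Or.inl ⟨by omega, by omega, by omega⟩
      · have hbl := inSub_bounds hs
        refine Or.inr (Or.inr ⟨by omega, by omega, ?_⟩)
        have key := ihl hs
        have e2 : l.size + r.size + 1 + 1 - a - ((mirror r).size + 1) = l.size + 1 - a := by omega
        have e3 : l.size + r.size + 1 + 1 - b - ((mirror r).size + 1) = l.size + 1 - b := by omega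
        rw [e2, e3]
        exact key
      · have hbr := inSub_bounds hs
        refine Or.inr (Or.inl ?_)
        have key := ihr hs
        have e2 : r.size + 1 - (a - (l.size + 1)) = l.size + r.size + 1 + 1 - a := by omega
        have e3 : r.size + 1 - (b - (l.size + 1)) = l.size + r.size + 1 + 1 - b := by omega
        rw [e2, e3] at key
        exact key

lemma rot_size {S T : BinTree} (h : Rot S T) : S.size = T.size := by
  induction h with
  | root A B C => simp [size]; omega
  | left R _ ih => simp [size, ih]
  | right L _ ih => simp [size, ih]

lemma rot_mirror {S T : BinTree} (h : Rot S T) : Rot T.mirror S.mirror := by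
  induction h with
  | root A B C => exact Rot.root _ _ _
  | left R _ ih => exact Rot.right _ ih
  | right L _ ih => exact Rot.left _ ih

/-- A right rotation increases the bracket vector pointwise. -/
lemma rot_rsz_le {S T : BinTree} (h : Rot S T) : ∀ z, rsz S z ≤ rsz T z := by
  induction h with
  | root A B C =>
      intro z
      rcases Nat.lt_trichotomy z (A.size + 1) with hz | hz | hz
      · rcases Nat.eq_zero_or_pos z with h0 | h0
        · subst h0
          rw [rsz_out (Or.inl rfl), rsz_out (Or.inl rfl)]
        · have hzA : z ≤ A.size := by omega
          rw [rsz_node_lt (show z ≤ (node A B).size by simp [size]; omega),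
            rsz_node_lt hzA, rsz_node_lt hzA]
      · rw [rsz_node_lt (show z ≤ (node A B).size by simp [size]; omega),
          rsz_node_eq hz, rsz_node_eq hz]
        simp [size]; omega
      · rcases Nat.lt_trichotomy z (A.size + B.size + 2) with hz2 | hz2 | hz2
        · rw [rsz_node_lt (show z ≤ (node A B).size by simp [size]; omega),
            rsz_node_gt hz, rsz_node_gt hz]
          rw [rsz_node_lt (show z - (A.size + 1) ≤ B.size by omega)]
        · rw [rsz_node_eq (show z = (node A B).size + 1 by simp [size]; omega),
            rsz_node_gt hz,
            rsz_node_eq (show z - (A.size + 1) = B.size + 1 by omega)]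
        · rw [rsz_node_gt (show (node A B).size + 1 < z by simp [size]; omega),
            rsz_node_gt hz,
            rsz_node_gt (show B.size + 1 < z - (A.size + 1) by omega)]
          have e : z - (A.size + 1) - (B.size + 1) = z - ((node A B).size + 1) := by
            simp [size]; omega
          rw [e]
  | @left L L' R hr ih =>
      intro z
      have hsz : L.size = L'.size := rot_size hr
      rcases Nat.lt_trichotomy z (L.size + 1) with hz | hz | hz
      · rcases Nat.eq_zero_or_pos z with h0 | h0
        · subst h0; rw [rsz_out (Or.inl rfl), rsz_out (Or.inl rfl)]
        · rw [rsz_node_lt (show z ≤ L.size by omega),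
            rsz_node_lt (show z ≤ L'.size by omega)]
          exact ih z
      · rw [rsz_node_eq hz, rsz_node_eq (by omega)]
      · rw [rsz_node_gt hz, rsz_node_gt (by omega), hsz]
  | @right L R R' hr ih =>
      intro z
      rcases Nat.lt_trichotomy z (L.size + 1) with hz | hz | hz
      · rcases Nat.eq_zero_or_pos z with h0 | h0
        · subst h0; rw [rsz_out (Or.inl rfl), rsz_out (Or.inl rfl)]
        · rw [rsz_node_lt (show z ≤ L.size by omega),
            rsz_node_lt (show z ≤ L.size by omega)]
      · rw [rsz_node_eq hz, rsz_node_eq hz]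
        exact (rot_size hr).le
      · rw [rsz_node_gt hz, rsz_node_gt hz]
        exact ih _

lemma tamari_rsz_le {S T : BinTree} (h : TamariLE S T) : ∀ z, rsz S z ≤ rsz T z := by
  induction h with
  | refl => exact fun z => le_rfl
  | tail _ hr ih => exact fun z => le_trans (ih z) (rot_rsz_le hr z)

/-- If the span of `x` does not reach the end of the tree, then either we can rotate
at the parent of `x` (when `x` is a left child), increasing its coordinate in a
controlled way, or there is some `q < x` whose span ends at the same place. -/
lemma rot_exists (S : BinTree) : ∀ x : ℕ, 1 ≤ x → x + rsz S x < S.size →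
    (∃ S', Rot S S' ∧ rsz S' x = rsz S x + rsz S (x + rsz S x + 1) + 1 ∧
      ∀ z, z ≠ x → rsz S' z = rsz S z) ∨
    (∃ q, 1 ≤ q ∧ q < x ∧ q + rsz S q = x + rsz S x) := by
  induction S with
  | leaf => intro x hx hlt; simp only [size, rsz] at hlt; omega
  | node l r ihl ihr =>
      intro x hx hlt
      rcases Nat.lt_trichotomy x (l.size + 1) with hxm | hxm | hxm
      · -- x in the left subtree
        have hxl : x ≤ l.size := by omega
        rw [rsz_node_lt hxl] at hlt
        by_cases he : x + rsz l x = l.size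
        · -- span of x reaches the end of l
          cases l with
          | leaf => simp only [size] at hxl; omega
          | node A B =>
            by_cases hroot : x = A.size + 1
            · -- x is the root of l : rotate at the root
              left
              refine ⟨node A (node B r), Rot.root A B r, ?_, ?_⟩
              · have v1 : rsz (node (node A B) r) x = B.size := by
                  rw [rsz_node_lt hxl, rsz_node_eq hroot]
                have v2 : rsz (node A (node B r)) x = B.size + r.size + 1 := by
                  rw [rsz_node_eq hroot]; simp [size]
                have harg : x + B.size + 1 = (node A B).size + 1 := by
                  simp only [size]; omega
                rw [v1, v2, harg, rsz_node_eq rfl]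
              · intro z hzx
                rcases Nat.eq_zero_or_pos z with h0 | h0
                · subst h0; rw [rsz_out (Or.inl rfl), rsz_out (Or.inl rfl)]
                rcases Nat.lt_trichotomy z (A.size + 1) with hz | hz | hz
                · rw [rsz_node_lt (show z ≤ (node A B).size by simp [size]; omega),
                    rsz_node_lt (show z ≤ A.size by omega),
                    rsz_node_lt (show z ≤ A.size by omega)]
                · omega
                · rcases Nat.lt_trichotomy z (A.size + B.size + 2) with hz2 | hz2 | hz2
                  · rw [rsz_node_lt (show z ≤ (node A B).size by simp [size]; omega),
                      rsz_node_gt hz, rsz_node_gt hz,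
                      rsz_node_lt (show z - (A.size + 1) ≤ B.size by omega)]
                  · rw [rsz_node_eq (show z = (node A B).size + 1 by simp [size]; omega),
                      rsz_node_gt hz,
                      rsz_node_eq (show z - (A.size + 1) = B.size + 1 by omega)]
                  · rw [rsz_node_gt (show (node A B).size + 1 < z by simp [size]; omega),
                      rsz_node_gt hz,
                      rsz_node_gt (show B.size + 1 < z - (A.size + 1) by omega)]
                    have e : z - (A.size + 1) - (B.size + 1) = z - ((node A B).size + 1) := by
                      simp [size]; omega
                    rw [e]
            · -- x is not the root of l : the root of l works as q
              right
              have hxgt : A.size + 1 < x := by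
                rcases Nat.lt_trichotomy x (A.size + 1) with hz | hz | hz
                · exfalso
                  have : rsz (node A B) x = rsz A x := rsz_node_lt (by omega)
                  have hb := rsz_bnd (T := A) (x := x) hx (by omega)
                  simp [size] at he; omega
                · exact absurd hz hroot
                · exact hz
              refine ⟨A.size + 1, by omega, hxgt, ?_⟩
              rw [rsz_node_lt (show A.size + 1 ≤ (node A B).size by simp only [size]; omega),
                rsz_node_eq rfl, rsz_node_lt hxl]
              simp only [size] at he ⊢; omega
        · -- span of x stays strictly inside l : use the induction hypothesis
          have hb := rsz_bnd (T := l) (x := x) hx hxl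
          rcases ihl x hx (by omega) with ⟨l', hrot, hval, hoth⟩ | ⟨q, hq1, hq2, hq3⟩
          · left
            have hsz : l.size = l'.size := rot_size hrot
            refine ⟨node l' r, Rot.left r hrot, ?_, ?_⟩
            · have harg : x + rsz l x + 1 ≤ l.size := by omega
              rw [rsz_node_lt (show x ≤ l'.size by omega),
                rsz_node_lt hxl, rsz_node_lt harg]
              exact hval
            · intro z hzx
              rcases Nat.eq_zero_or_pos z with h0 | h0
              · subst h0; rw [rsz_out (Or.inl rfl), rsz_out (Or.inl rfl)]
              rcases Nat.lt_trichotomy z (l.size + 1) with hz | hz | hz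
              · rw [rsz_node_lt (show z ≤ l'.size by omega),
                  rsz_node_lt (show z ≤ l.size by omega)]
                exact hoth z hzx
              · rw [rsz_node_eq (by omega), rsz_node_eq hz]
              · rw [rsz_node_gt (by omega), rsz_node_gt hz, hsz]
          · right
            refine ⟨q, hq1, hq2, ?_⟩
            rw [rsz_node_lt (show q ≤ l.size by omega), rsz_node_lt hxl]
            exact hq3
      · -- x is the root : its span reaches the end, contradiction
        rw [rsz_node_eq hxm] at hlt
        simp [size] at hlt; omega
      · -- x in the right subtree
        rw [rsz_node_gt hxm] at hlt
        simp only [size] at hlt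
        have hx' : 1 ≤ x - (l.size + 1) := by omega
        rcases ihr (x - (l.size + 1)) hx' (by omega) with
          ⟨r', hrot, hval, hoth⟩ | ⟨q, hq1, hq2, hq3⟩
        · left
          refine ⟨node l r', Rot.right l hrot, ?_, ?_⟩
          · rw [rsz_node_gt hxm, rsz_node_gt hxm,
              rsz_node_gt (show l.size + 1 < x + rsz r (x - (l.size + 1)) + 1 by omega)]
            have e : x + rsz r (x - (l.size + 1)) + 1 - (l.size + 1)
                = x - (l.size + 1) + rsz r (x - (l.size + 1)) + 1 := by omega
            rw [e]
            exact hval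
          · intro z hzx
            rcases Nat.eq_zero_or_pos z with h0 | h0
            · subst h0; rw [rsz_out (Or.inl rfl), rsz_out (Or.inl rfl)]
            rcases Nat.lt_trichotomy z (l.size + 1) with hz | hz | hz
            · rw [rsz_node_lt (show z ≤ l.size by omega),
                rsz_node_lt (show z ≤ l.size by omega)]
            · rw [rsz_node_eq hz, rsz_node_eq hz, rot_size hrot]
            · rw [rsz_node_gt hz, rsz_node_gt hz]
              exact hoth _ (by omega)
        · right
          refine ⟨q + (l.size + 1), by omega, by omega, ?_⟩
          rw [rsz_node_gt (show l.size + 1 < q + (l.size + 1) by omega),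
            rsz_node_gt hxm]
          have e : q + (l.size + 1) - (l.size + 1) = q := by omega
          rw [e]
          omega

/-- The bracket vector determines the tree. -/
lemma rsz_rigid : ∀ S T : BinTree, S.size = T.size → (∀ z, rsz S z = rsz T z) → S = T := by
  intro S
  induction S with
  | leaf => intro T hsz _; exact (size_eq_zero hsz.symm).symm
  | node A B ihA ihB =>
      intro T hsz hz
      cases T with
      | leaf => simp [size] at hsz
      | node C D =>
          simp only [size] at hsz
          -- first show A.size = C.size
          have hAC : A.size = C.size := by
            rcases Nat.lt_trichotomy A.size C.size with h | h | h
            · exfalso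
              have h1 : rsz (node A B) (A.size + 1) = B.size := rsz_node_eq rfl
              have h2 : rsz (node C D) (A.size + 1) = rsz C (A.size + 1) :=
                rsz_node_lt (by omega)
              have hb := rsz_bnd (T := C) (x := A.size + 1) (by omega) (by omega)
              have := hz (A.size + 1)
              rw [h1, h2] at this
              omega
            · exact h
            · exfalso
              have h1 : rsz (node C D) (C.size + 1) = D.size := rsz_node_eq rfl
              have h2 : rsz (node A B) (C.size + 1) = rsz A (C.size + 1) :=
                rsz_node_lt (by omega)
              have hb := rsz_bnd (T := A) (x := C.size + 1) (by omega) (by omega)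
              have := hz (C.size + 1)
              rw [h1, h2] at this
              omega
          have hA : A = C := by
            refine ihA C hAC (fun z => ?_)
            rcases Nat.eq_zero_or_pos z with h0 | h0
            · subst h0; rw [rsz_out (Or.inl rfl), rsz_out (Or.inl rfl)]
            by_cases hzA : z ≤ A.size
            · have := hz z
              rwa [rsz_node_lt hzA, rsz_node_lt (by omega)] at this
            · rw [rsz_out (Or.inr (by omega)), rsz_out (Or.inr (by omega))]
          have hB : B = D := by
            refine ihB D (by omega) (fun z => ?_)
            rcases Nat.eq_zero_or_pos z with h0 | h0
            · subst h0; rw [rsz_out (Or.inl rfl), rsz_out (Or.inl rfl)]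
            by_cases hzB : z ≤ B.size
            · have := hz (z + (A.size + 1))
              rw [rsz_node_gt (by omega), rsz_node_gt (by omega)] at this
              have e : z + (A.size + 1) - (A.size + 1) = z := by omega
              have e2 : z + (A.size + 1) - (C.size + 1) = z := by omega
              rw [e, e2] at this
              exact this
            · rw [rsz_out (Or.inr (by omega)), rsz_out (Or.inr (by omega))]
          rw [hA, hB]

/-- Main converse: pointwise domination of bracket vectors implies Tamari order. -/
lemma tamari_of_rsz_le : ∀ (D : ℕ) (S T : BinTree), S.size = T.size →
    (∀ z, rsz S z ≤ rsz T z) →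
    (∑ z ∈ Finset.range (T.size + 1), (rsz T z - rsz S z)) ≤ D →
    TamariLE S T := by
  intro D
  induction D with
  | zero =>
      intro S T hsz hle hsum
      have heq : ∀ z, rsz S z = rsz T z := by
        intro z
        by_cases hz : z ≤ T.size
        · have hmem : z ∈ Finset.range (T.size + 1) := Finset.mem_range.mpr (by omega)
          have := Finset.sum_eq_zero_iff.mp (Nat.le_zero.mp hsum) z hmem
          have := hle z
          omega
        · rw [rsz_out (Or.inr (by omega)), rsz_out (Or.inr (by omega))]
      rw [rsz_rigid S T hsz heq]
      exact Relation.ReflTransGen.refl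
  | succ D ih =>
      intro S T hsz hle hsum
      by_cases hall : ∀ z, rsz T z ≤ rsz S z
      · have heq : ∀ z, rsz S z = rsz T z := fun z => le_antisymm (hle z) (hall z)
        rw [rsz_rigid S T hsz heq]
        exact Relation.ReflTransGen.refl
      · push_neg at hall
        classical
        have hex : ∃ x, rsz S x < rsz T x := by
          obtain ⟨z, hz⟩ := hall
          exact ⟨z, lt_of_le_of_ne (hle z) (by omega)⟩
        let x := Nat.find hex
        have hx : rsz S x < rsz T x := Nat.find_spec hex
        have hxmin : ∀ q, q < x → ¬ (rsz S q < rsz T q) := fun q hq => Nat.find_min hex hq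
        have hx1 : 1 ≤ x := by
          by_contra h
          have : x = 0 := by omega
          rw [this, rsz_out (T := S) (Or.inl rfl), rsz_out (T := T) (Or.inl rfl)] at hx
          omega
        have hxn : x ≤ T.size := by
          by_contra h
          rw [rsz_out (T := T) (Or.inr (by omega))] at hx
          omega
        have hbT := rsz_bnd (T := T) (x := x) hx1 hxn
        have hlt : x + rsz S x < S.size := by omega
        rcases rot_exists S x hx1 hlt with ⟨S', hrot, hval, hoth⟩ | ⟨q, hq1, hq2, hq3⟩
        · -- rotate and recurse
          set y := x + rsz S x + 1 with hy
          have hy1 : x < y := by omega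
          have hy2 : y ≤ x + rsz T x := by omega
          have hclo := rsz_closure (T := T) hy1 hy2
          have hS'le : ∀ z, rsz S' z ≤ rsz T z := by
            intro z
            by_cases hzx : z = x
            · subst hzx
              rw [hval]
              have := hle y
              omega
            · rw [hoth z hzx]; exact hle z
          have hS'size : S'.size = T.size := by rw [← rot_size hrot]; exact hsz
          have hsum' : (∑ z ∈ Finset.range (T.size + 1), (rsz T z - rsz S' z)) ≤ D := by
            have hstrict : (∑ z ∈ Finset.range (T.size + 1), (rsz T z - rsz S' z))
                < ∑ z ∈ Finset.range (T.size + 1), (rsz T z - rsz S z) := by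
              refine Finset.sum_lt_sum (fun i _ => ?_) ⟨x, Finset.mem_range.mpr (by omega), ?_⟩
              · by_cases hix : i = x
                · subst hix; rw [hval]; omega
                · rw [hoth i hix]
              · rw [hval]
                have := hS'le x
                rw [hval] at this
                omega
            omega
          exact Relation.ReflTransGen.head hrot (ih S' T hS'size hS'le hsum')
        · -- impossible by minimality of x
          exfalso
          have hTq : x ≤ q + rsz T q := by
            have := hle q
            omega
          have hclo := rsz_closure (T := T) hq2 hTq
          have : rsz S q < rsz T q := by omega
          exact hxmin q hq2 this

/-- The bracket-vector characterization of the Tamari order. -/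
lemma tamari_iff_rsz {S T : BinTree} (hsz : S.size = T.size) :
    TamariLE S T ↔ ∀ z, rsz S z ≤ rsz T z := by
  constructor
  · exact tamari_rsz_le
  · intro h
    exact tamari_of_rsz_le _ S T hsz h le_rfl

lemma tamari_mirror {S T : BinTree} (h : TamariLE S T) :
    TamariLE T.mirror S.mirror := by
  induction h with
  | refl => exact Relation.ReflTransGen.refl
  | tail _ hr ih => exact Relation.ReflTransGen.head (rot_mirror hr) ih

lemma incRel_mirror {T : BinTree} {a b : ℕ} (h : incRel T a b) :
    decRel T.mirror (T.size + 1 - a) (T.size + 1 - b) := by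
  obtain ⟨hab, hne, hs⟩ := h
  have hb := inSub_bounds hs
  have hm := inSub_mirror hs
  exact ⟨by omega, by omega, hm⟩

lemma decRel_mirror {T : BinTree} {a b : ℕ} (h : decRel T.mirror a b) :
    incRel T (T.size + 1 - a) (T.size + 1 - b) := by
  obtain ⟨hba, hne, hs⟩ := h
  have hb := inSub_bounds hs
  rw [mirror_size] at hb
  have hm := inSub_mirror hs
  rw [mirror_mirror, mirror_size] at hm
  exact ⟨by omega, by omega, hm⟩

end BinTree

/-- Let `[T1,T1']` and `[T2,T2']` be two Tamari intervals of size `n` with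
interval-posets `I1 = IP[T1,T1']` and `I2 = IP[T2,T2']`. Then `[T1,T1'] ⊆ [T2,T2']`
(i.e. `T2 ≤ T1` and `T1' ≤ T2'`) iff every relation of `I2` is a relation of `I1`. -/
theorem interval_inclusion (n : ℕ) (T1 T1' T2 T2' : BinTree)
    (h1 : T1.size = n) (h1' : T1'.size = n) (h2 : T2.size = n) (h2' : T2'.size = n)
    (ht1 : TamariLE T1 T1') (ht2 : TamariLE T2 T2') :
    (TamariLE T2 T1 ∧ TamariLE T1' T2') ↔
      ∀ a b, IPrel T2 T2' a b → IPrel T1 T1' a b := by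
  have hsz21 : T2.size = T1.size := by rw [h2, h1]
  have hszm : (mirror T2').size = (mirror T1').size := by
    rw [mirror_size, mirror_size, h1', h2']
  constructor
  · rintro ⟨hA, hB⟩ a b hrel
    rcases hrel with hdec | hinc
    · left
      have hle := tamari_rsz_le hA
      rw [decRel_iff_rsz] at hdec ⊢
      exact ⟨hdec.1, hdec.2.1, le_trans hdec.2.2 (by have := hle b; omega)⟩
    · right
      have hbd := inSub_bounds hinc.2.2
      have hd := incRel_mirror hinc
      have hmir := tamari_mirror hB
      have hle := tamari_rsz_le hmir
      have hd1 : decRel (mirror T1') (T2'.size + 1 - a) (T2'.size + 1 - b) := by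
        rw [decRel_iff_rsz] at hd ⊢
        exact ⟨hd.1, hd.2.1, le_trans hd.2.2
          (by have := hle (T2'.size + 1 - b); omega)⟩
      have hfin := decRel_mirror hd1
      have e1 : T1'.size + 1 - (T2'.size + 1 - a) = a := by rw [h1', h2']; omega
      have e2 : T1'.size + 1 - (T2'.size + 1 - b) = b := by rw [h1', h2']; omega
      rw [e1, e2] at hfin
      exact hfin
  · intro h
    constructor
    · rw [tamari_iff_rsz hsz21]
      intro z
      by_cases h0 : rsz T2 z = 0
      · omega
      · have hz1 : 1 ≤ z := by
          by_contra hc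
          exact h0 (rsz_out (Or.inl (by omega)))
        have hzn : z ≤ T2.size := by
          by_contra hc
          exact h0 (rsz_out (Or.inr (by omega)))
        have hd : decRel T2 (z + rsz T2 z) z :=
          decRel_iff_rsz.mpr ⟨hz1, by omega, le_rfl⟩
        rcases h _ _ (Or.inl hd) with hd1 | hi1
        · have := decRel_iff_rsz.mp hd1
          omega
        · exact absurd hi1.1 (by omega)
    · have key : TamariLE (mirror T2') (mirror T1') := by
        rw [tamari_iff_rsz hszm]
        intro z
        by_cases h0 : rsz (mirror T2') z = 0
        · omega
        · have hz1 : 1 ≤ z := by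
            by_contra hc
            exact h0 (rsz_out (Or.inl (by omega)))
          have hzn : z ≤ (mirror T2').size := by
            by_contra hc
            exact h0 (rsz_out (Or.inr (by omega)))
          have hbnd := rsz_bnd (T := mirror T2') hz1 hzn
          rw [mirror_size, h2'] at hbnd hzn
          have hd : decRel (mirror T2') (z + rsz (mirror T2') z) z :=
            decRel_iff_rsz.mpr ⟨hz1, by omega, le_rfl⟩
          have hi2 := decRel_mirror hd
          rcases h _ _ (Or.inr hi2) with hd1 | hi1
          · have hx := hd1.1
            rw [h2'] at hx
            omega
          · have hd2 := incRel_mirror hi1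
            rw [h2'] at hd2
            have e1 : T1'.size + 1 - (n + 1 - (z + rsz (mirror T2') z))
                = z + rsz (mirror T2') z := by rw [h1']; omega
            have e2 : T1'.size + 1 - (n + 1 - z) = z := by rw [h1']; omega
            rw [e1, e2] at hd2
            have := decRel_iff_rsz.mp hd2
            omega
      have := tamari_mirror key
      rwa [mirror_mirror, mirror_mirror] at this
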